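/- The Jacobian matrix of the Type I vector field at the disease-free equilibrium (v_c·K, 0) is the upper-triangular matrix with diagonal entries −μ_v·v_c and α·β_v·v_c²·K − δ, and it satisfies trace < 0 and determinant > 0 if and only if v_c² < δ/(K·α·β_v). -/

import Mathlib

/-- Jacobian matrix of the Type I vector field at the point `(s, p)`. -/
noncomputable def jacI (μv βv K vc α δ : ℝ) (s p : ℝ) : Matrix (Fin 2) (Fin 2) ℝ :=
  !![deriv (fun x => vc * μv * x * (1 - x / (vc * K)) - βv * vc * x * p) s,
     deriv (fun y => vc * μv * s * (1 - s / (vc * K)) - βv * vc * s * y) p;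
     deriv (fun x => α * βv * vc * x * p - δ * p) s,
     deriv (fun y => α * βv * vc * s * y - δ * y) p]

/-- The Type I Jacobian at the disease-free equilibrium `(vc·K, 0)` is
upper triangular with diagonal entries `−μv·vc` and `α·βv·vc²·K − δ`, and it satisfies
trace < 0 and det > 0 iff `vc² < δ/(K·α·βv)`. -/
theorem typeI_disease_free_stability (μv βv K vc α δ : ℝ)
    (hμ : 0 < μv) (hβ : 0 < βv) (hK : 0 < K) (hv : 0 < vc) (hα : 0 < α) (hδ : 0 < δ) :
    jacI μv βv K vc α δ (vc * K) 0 1 0 = 0 ∧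
    jacI μv βv K vc α δ (vc * K) 0 0 0 = -(μv * vc) ∧
    jacI μv βv K vc α δ (vc * K) 0 1 1 = α * βv * vc ^ 2 * K - δ ∧
    ((jacI μv βv K vc α δ (vc * K) 0).trace < 0 ∧
        0 < (jacI μv βv K vc α δ (vc * K) 0).det ↔
      vc ^ 2 < δ / (K * α * βv)) := by
  have hvK : vc * K ≠ 0 := by positivity
  -- entry (1,0)
  have h10 : jacI μv βv K vc α δ (vc * K) 0 1 0 = 0 := by
    show deriv (fun x => α * βv * vc * x * (0:ℝ) - δ * 0) (vc*K) = 0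
    have : (fun x : ℝ => α * βv * vc * x * (0:ℝ) - δ * 0) = fun _ => 0 := by
      funext x; ring
    rw [this, deriv_const]
  -- entry (0,0)
  have h00 : jacI μv βv K vc α δ (vc * K) 0 0 0 = -(μv * vc) := by
    show deriv (fun x => vc * μv * x * (1 - x / (vc * K)) - βv * vc * x * 0) (vc*K) = -(μv * vc)
    have h : HasDerivAt (fun x => vc * μv * x * (1 - x / (vc * K)) - βv * vc * x * 0)
        (-(μv * vc)) (vc * K) := by
      have h1 : HasDerivAt (fun x : ℝ => vc * μv * x) (vc * μv * 1) (vc*K) :=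
        (hasDerivAt_id _).const_mul _
      have h2 : HasDerivAt (fun x : ℝ => 1 - x / (vc * K)) (-(1 / (vc*K))) (vc*K) :=
        ((hasDerivAt_id _).div_const _).const_sub 1
      have h3 : HasDerivAt (fun x : ℝ => βv * vc * x * 0) (βv * vc * 1 * 0) (vc*K) :=
        ((hasDerivAt_id _).const_mul _).mul_const 0
      have := (h1.mul h2).sub h3
      refine this.congr_deriv ?_
      field_simp
      ring
    exact h.deriv
  -- entry (1,1)
  have h11 : jacI μv βv K vc α δ (vc * K) 0 1 1 = α * βv * vc ^ 2 * K - δ := by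
    show deriv (fun y => α * βv * vc * (vc*K) * y - δ * y) 0 = α * βv * vc ^ 2 * K - δ
    have h : HasDerivAt (fun y : ℝ => α * βv * vc * (vc*K) * y - δ * y)
        (α * βv * vc ^ 2 * K - δ) 0 := by
      have h1 : HasDerivAt (fun y : ℝ => α * βv * vc * (vc*K) * y)
          (α * βv * vc * (vc*K) * 1) 0 := (hasDerivAt_id _).const_mul _
      have h2 : HasDerivAt (fun y : ℝ => δ * y) (δ * 1) 0 := (hasDerivAt_id _).const_mul _
      have := h1.sub h2
      refine this.congr_deriv ?_
      ring
    exact h.deriv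
  refine ⟨h10, h00, h11, ?_⟩
  have htr : (jacI μv βv K vc α δ (vc * K) 0).trace =
      -(μv * vc) + (α * βv * vc ^ 2 * K - δ) := by
    rw [Matrix.trace_fin_two, h00, h11]
  have hdet : (jacI μv βv K vc α δ (vc * K) 0).det =
      -(μv * vc) * (α * βv * vc ^ 2 * K - δ) := by
    rw [Matrix.det_fin_two, h00, h11, h10]
    ring
  rw [htr, hdet]
  rw [lt_div_iff₀ (by positivity)]
  constructor
  · rintro ⟨_, hd⟩
    nlinarith [mul_pos hμ hv]
  · intro h
    constructor
    · nlinarith [mul_pos hμ hv]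
    · nlinarith [mul_pos hμ hv]
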